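/- Consider the switched positive linear system with discrete and distributed delays ẋ(t) = A⁰_{σ(t)} x(t) + Σ_{i=1}^{m} A^i_{σ(t)} x(t − h^i_{σ(t)}) + ∫_{−h}^{0} B_{σ(t)}(θ) x(t+θ) dθ, t ≥ 0, σ ∈ Σ₊, where for each k = 1,…,N the matrix A⁰_k is Metzler, A^i_k ≥ 0 entrywise, B_k : [−h,0] → ℝ^{n×n} is continuous with B_k(θ) ≥ 0 entrywise, and 0 < h^1_k ≤ … ≤ h^m_k ≤ h. If there exists ξ ∈ ℝⁿ, ξ ≫ 0, such that (A⁰_k + Σ_{i=1}^{m} A^i_k + ∫_{−h}^{0} B_k(s) ds) ξ ≪ 0 for every k = 1,…,N, then the system is exponentially stable under arbitrary switching: there exist M > 0, α > 0 such that every solution with initial function φ ∈ C([−h,0],ℝⁿ) and any σ ∈ Σ₊ satisfies ‖x(t)‖ ≤ M e^{−αt} ‖φ‖ for all t ≥ 0. -/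

import Mathlib

open MeasureTheory Set Filter Matrix
open scoped ENNReal

noncomputable section

/-- Row-sum matrix norm (the operator norm induced by the `∞`-norm). -/
def matNorm {p q : ℕ} (A : Matrix (Fin p) (Fin q) ℝ) : ℝ :=
  ⨆ i, ∑ j, |A i j|

/-- The Metzler matrix `M(A)` associated with `A`. -/
def metz {n : ℕ} (A : Matrix (Fin n) (Fin n) ℝ) : Matrix (Fin n) (Fin n) ℝ :=
  Matrix.of fun i j => if i = j then A i j else |A i j|

/-- A switching signal: piecewise constant, right continuous, with strictly
positive dwell time (and normalized to be constant on `(-∞, 0]`). -/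
def IsSwitchingSignal {N : ℕ} (σ : ℝ → Fin N) : Prop :=
  (∀ t ≤ (0:ℝ), σ t = σ 0) ∧
  ∃ d : ℝ, 0 < d ∧ ∃ τ : ℕ → ℝ, τ 0 = 0 ∧ (∀ k, τ k + d ≤ τ (k + 1)) ∧
    ∀ k : ℕ, ∀ t ∈ Set.Ico (τ k) (τ (k + 1)), σ t = σ (τ k)

/-- `x` is a solution of the switched system with discrete delays `hd` and distributed
delay kernel `B`:
`ẋ(t) = A⁰_{σ(t)} x(t) + Σ_l A^l_{σ(t)} x(t - h^l_{σ(t)}) + ∫_{-h}^0 B_{σ(t)}(θ) x(t+θ) dθ`,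
with switching signal `σ` and initial function `φ`. -/
def IsSolutionD (h : ℝ) {N n m : ℕ} (σ : ℝ → Fin N)
    (A0 : Fin N → Matrix (Fin n) (Fin n) ℝ)
    (A : Fin N → Fin m → Matrix (Fin n) (Fin n) ℝ)
    (hd : Fin N → Fin m → ℝ)
    (B : Fin N → ℝ → Matrix (Fin n) (Fin n) ℝ)
    (φ : C(Set.Icc (-h) (0:ℝ), Fin n → ℝ)) (x : ℝ → Fin n → ℝ) : Prop :=
  ContinuousOn x (Set.Ici (-h)) ∧
  (∀ θ : Set.Icc (-h) (0:ℝ), x (θ : ℝ) = φ θ) ∧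
  ∀ t : ℝ, 0 ≤ t → (∀ᶠ s in nhds t, σ s = σ t) → ∀ i,
    HasDerivWithinAt (fun s => x s i)
      ((∑ j, A0 (σ t) i j * x t j) + (∑ l, ∑ j, A (σ t) l i j * x (t - hd (σ t) l) j) +
        ∑ j, ∫ θ in (-h)..(0:ℝ), B (σ t) θ i j * x (t + θ) j)
      (Set.Ici t) t

/-- Exponential stability, under arbitrary switching, of the switched system with
discrete and distributed delays. -/
def ExpStableSwD (h : ℝ) {N n m : ℕ}
    (A0 : Fin N → Matrix (Fin n) (Fin n) ℝ)
    (A : Fin N → Fin m → Matrix (Fin n) (Fin n) ℝ)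
    (hd : Fin N → Fin m → ℝ)
    (B : Fin N → ℝ → Matrix (Fin n) (Fin n) ℝ) : Prop :=
  ∃ M > (0:ℝ), ∃ α > (0:ℝ), ∀ σ : ℝ → Fin N, IsSwitchingSignal σ →
    ∀ φ x, IsSolutionD h σ A0 A hd B φ x →
      ∀ t ≥ (0:ℝ), ‖x t‖ ≤ M * Real.exp (-α * t) * ‖φ‖

/-- `x` is a solution of the (non-switched) system with discrete delays `hd` and
distributed delay kernel `B`, with initial function `φ`. -/
def IsSolutionD1 (h : ℝ) {n m : ℕ}
    (A0 : Matrix (Fin n) (Fin n) ℝ)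
    (A : Fin m → Matrix (Fin n) (Fin n) ℝ)
    (hd : Fin m → ℝ)
    (B : ℝ → Matrix (Fin n) (Fin n) ℝ)
    (φ : C(Set.Icc (-h) (0:ℝ), Fin n → ℝ)) (x : ℝ → Fin n → ℝ) : Prop :=
  ContinuousOn x (Set.Ici (-h)) ∧
  (∀ θ : Set.Icc (-h) (0:ℝ), x (θ : ℝ) = φ θ) ∧
  ∀ t : ℝ, 0 ≤ t → ∀ i,
    HasDerivWithinAt (fun s => x s i)
      ((∑ j, A0 i j * x t j) + (∑ l, ∑ j, A l i j * x (t - hd l) j) +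
        ∑ j, ∫ θ in (-h)..(0:ℝ), B θ i j * x (t + θ) j)
      (Set.Ici t) t

/-- Exponential stability of a single (non-switched) system with discrete and
distributed delays. -/
def ExpStableD1 (h : ℝ) {n m : ℕ}
    (A0 : Matrix (Fin n) (Fin n) ℝ)
    (A : Fin m → Matrix (Fin n) (Fin n) ℝ)
    (hd : Fin m → ℝ)
    (B : ℝ → Matrix (Fin n) (Fin n) ℝ) : Prop :=
  ∃ M > (0:ℝ), ∃ α > (0:ℝ), ∀ φ x, IsSolutionD1 h A0 A hd B φ x →
    ∀ t ≥ (0:ℝ), ‖x t‖ ≤ M * Real.exp (-α * t) * ‖φ‖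


private lemma keyRightDeriv {N n m : ℕ} {h : ℝ} (hh : 0 < h) {σ : ℝ → Fin N}
    (hσ : IsSwitchingSignal σ)
    {A0 : Fin N → Matrix (Fin n) (Fin n) ℝ}
    {A : Fin N → Fin m → Matrix (Fin n) (Fin n) ℝ}
    {hd : Fin N → Fin m → ℝ} (hdle : ∀ k l, hd k l ≤ h)
    {B : Fin N → ℝ → Matrix (Fin n) (Fin n) ℝ}
    (hBcont : ∀ k i j, ContinuousOn (fun θ => B k θ i j) (Set.Icc (-h) 0))
    {φ : C(Set.Icc (-h) (0:ℝ), Fin n → ℝ)} {x : ℝ → Fin n → ℝ}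
    (hsol : IsSolutionD h σ A0 A hd B φ x) {t₀ : ℝ} (ht₀ : 0 ≤ t₀) (i : Fin n) :
    HasDerivWithinAt (fun s => x s i)
      ((∑ j, A0 (σ t₀) i j * x t₀ j) + (∑ l, ∑ j, A (σ t₀) l i j * x (t₀ - hd (σ t₀) l) j) +
        ∑ j, ∫ θ in (-h)..(0:ℝ), B (σ t₀) θ i j * x (t₀ + θ) j)
      (Set.Ici t₀) t₀ := by
  obtain ⟨hx, hφ, hode⟩ := hsol
  obtain ⟨-, d, hd0, τ, hτ0, hgap, hconst⟩ := hσ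
  set k := σ t₀ with hk
  -- clamped versions of `x` and `B k`, globally continuous
  have hclamp : ∀ u : ℝ, max u (-h) ∈ Set.Ici (-h) := fun u => Set.mem_Ici.mpr (le_max_right _ _)
  set X : ℝ → Fin n → ℝ := fun u => x (max u (-h)) with hX
  have hXeq : ∀ u, -h ≤ u → X u = x u := fun u hu => by
    simp only [hX, max_eq_left hu]
  have hXc : ∀ j, Continuous fun u => X u j := by
    intro j
    have : Continuous X := hx.comp_continuous (continuous_id.max continuous_const) hclamp
    exact (continuous_apply j).comp this
  set cl : ℝ → ℝ := fun θ => max (-h) (min θ 0) with hcl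
  have hclmem : ∀ θ, cl θ ∈ Set.Icc (-h) (0:ℝ) := fun θ =>
    ⟨le_max_left _ _, max_le (by linarith) (min_le_right _ _)⟩
  have hcleq : ∀ θ ∈ Set.Icc (-h) (0:ℝ), cl θ = θ := by
    intro θ hθ
    rw [hcl]
    simp only []
    rw [min_eq_left hθ.2, max_eq_right hθ.1]
  have hclc : Continuous cl := continuous_const.max (continuous_id.min continuous_const)
  set Bc : ℝ → Fin n → Fin n → ℝ := fun θ a b => B k (cl θ) a b with hBc
  have hBcc : ∀ a b, Continuous fun θ => Bc θ a b := fun a b =>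
    (hBcont k a b).comp_continuous hclc hclmem
  set G : ℝ → ℝ := fun u =>
    (∑ j, A0 k i j * X u j) + (∑ l, ∑ j, A k l i j * X (u - hd k l) j) +
      ∑ j, ∫ θ in (-h)..(0:ℝ), Bc θ i j * X (u + θ) j with hG
  have hGc : Continuous G := by
    refine Continuous.add (Continuous.add ?_ ?_) ?_
    · exact continuous_finset_sum _ fun j _ => continuous_const.mul (hXc j)
    · exact continuous_finset_sum _ fun l _ => continuous_finset_sum _ fun j _ =>
        continuous_const.mul ((hXc j).comp (continuous_id.sub continuous_const))
    · refine continuous_finset_sum _ fun j _ => ?_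
      refine intervalIntegral.continuous_parametric_intervalIntegral_of_continuous'
        (f := fun u θ => Bc θ i j * X (u + θ) j) ?_ _ _
      have hcu : Continuous fun p : ℝ × ℝ => Bc p.2 i j * X (p.1 + p.2) j :=
        (((hBcc i j).comp continuous_snd).mul
          ((hXc j).comp (continuous_fst.add continuous_snd)))
      exact hcu
  have hGeq : ∀ u, 0 ≤ u → G u =
      (∑ j, A0 k i j * x u j) + (∑ l, ∑ j, A k l i j * x (u - hd k l) j) +
        ∑ j, ∫ θ in (-h)..(0:ℝ), B k θ i j * x (u + θ) j := by
    intro u hu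
    rw [hG]
    simp only []
    congr 1
    congr 1
    · rw [hXeq u (by linarith)]
    · refine Finset.sum_congr rfl fun l _ => Finset.sum_congr rfl fun j _ => ?_
      rw [hXeq _ (by have := hdle k l; linarith)]
    · refine Finset.sum_congr rfl fun j _ => ?_
      refine intervalIntegral.integral_congr fun θ hθ => ?_
      rw [Set.uIcc_of_le (by linarith : -h ≤ (0:ℝ))] at hθ
      rw [hBc]
      simp only []
      rw [hcleq θ hθ, hXeq _ (by have := hθ.1; linarith)]
  -- locating t₀ in the switching partition
  have hτmono : ∀ kk : ℕ, (kk : ℝ) * d ≤ τ kk := by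
    intro kk
    induction kk with
    | zero => simp [hτ0]
    | succ p ih =>
      have h1 := hgap p
      push_cast
      push_cast at ih
      nlinarith
  have hex : ∃ kk : ℕ, t₀ < τ (kk + 1) := by
    obtain ⟨p, hp⟩ := exists_nat_gt (t₀ / d)
    refine ⟨p, ?_⟩
    rw [div_lt_iff₀ hd0] at hp
    have h2 := hτmono (p + 1)
    push_cast at h2
    nlinarith
  set K := Nat.find hex with hKdef
  have hK1 : t₀ < τ (K + 1) := Nat.find_spec hex
  have hK0 : τ K ≤ t₀ := by
    rcases Nat.eq_zero_or_pos K with h0 | h0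
    · rw [h0, hτ0]; exact ht₀
    · obtain ⟨p, hp⟩ := Nat.exists_eq_succ_of_ne_zero h0.ne'
      have hmin := Nat.find_min hex (show p < K by omega)
      rw [hp, Nat.succ_eq_add_one]
      exact not_lt.1 hmin
  have hσIco : ∀ u ∈ Set.Ico (τ K) (τ (K + 1)), σ u = k := by
    intro u hu
    rw [hconst K u hu, hk, hconst K t₀ ⟨hK0, hK1⟩]
  have hODE : ∀ u ∈ Set.Ioo t₀ (τ (K + 1)),
      HasDerivWithinAt (fun s => x s i) (G u) (Set.Ici u) u := by
    intro u hu
    have hu0 : 0 ≤ u := le_trans ht₀ hu.1.le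
    have hσu : σ u = k := hσIco u ⟨le_trans hK0 hu.1.le, hu.2⟩
    have hev : ∀ᶠ s in nhds u, σ s = σ u := by
      have hmem : Set.Ioo (τ K) (τ (K + 1)) ∈ nhds u :=
        Ioo_mem_nhds (lt_of_le_of_lt hK0 hu.1) hu.2
      filter_upwards [hmem] with s hs
      rw [hσIco s (Set.Ioo_subset_Ico_self hs), hσu]
    have hder := hode u hu0 hev i
    rw [hσu] at hder
    rwa [hGeq u hu0]
  set P : ℝ → ℝ := fun u => ∫ v in t₀..u, G v with hP
  have hPd : ∀ u, HasDerivAt P (G u) u := fun u =>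
    intervalIntegral.integral_hasDerivAt_right (hGc.intervalIntegrable _ _)
      (hGc.stronglyMeasurableAtFilter _ _) hGc.continuousAt
  have hPc : Continuous P := continuous_iff_continuousAt.2 fun u => (hPd u).continuousAt
  have hP0 : P t₀ = 0 := intervalIntegral.integral_same
  have hxi : ContinuousOn (fun u => x u i) (Set.Ici (-h)) :=
    (continuous_apply i).comp_continuousOn hx
  have key : ∀ s ∈ Set.Ioo t₀ (τ (K + 1)), x s i = x t₀ i + P s := by
    intro s hs
    have hcst : ∀ t' ∈ Set.Ioc t₀ s, x s i - P s = x t' i - P t' := by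
      intro t' ht'
      have hsub : Set.Icc t' s ⊆ Set.Ici (-h) := by
        intro y hy
        have h1 : -h < t₀ := by linarith
        have := lt_of_lt_of_le (lt_of_lt_of_le h1 ht'.1.le) hy.1
        exact this.le
      exact (constant_of_has_deriv_right_zero (f := fun u => x u i - P u) (a := t') (b := s)
        ((hxi.mono hsub).sub hPc.continuousOn)
        (fun u hu => by
          have huo : u ∈ Set.Ioo t₀ (τ (K + 1)) :=
            ⟨lt_of_lt_of_le ht'.1 hu.1, lt_trans hu.2 hs.2⟩
          have h' : HasDerivWithinAt (fun u => x u i - P u) (G u - G u) (Set.Ici u) u :=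
            (hODE u huo).sub (hPd u).hasDerivWithinAt
          rwa [sub_self] at h')
        s ⟨ht'.2, le_rfl⟩)
    have hlim : Tendsto (fun t' => x t' i - P t') (nhdsWithin t₀ (Set.Ioi t₀))
        (nhds (x t₀ i - P t₀)) := by
      refine Tendsto.sub ?_ (hPc.continuousAt.tendsto.mono_left nhdsWithin_le_nhds)
      refine ((hxi t₀ (Set.mem_Ici.mpr (by linarith))).mono ?_)
      intro y hy
      have hy' : t₀ < y := hy
      exact Set.mem_Ici.mpr (by linarith)
    have hevc : (fun t' => x t' i - P t') =ᶠ[nhdsWithin t₀ (Set.Ioi t₀)]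
        fun _ => x s i - P s := by
      filter_upwards [Ioc_mem_nhdsGT_of_mem (⟨le_rfl, hs.1⟩ : t₀ ∈ Set.Ico t₀ s)] with t' ht'
      exact (hcst t' ht').symm
    have hceq : x s i - P s = x t₀ i - P t₀ :=
      tendsto_nhds_unique tendsto_const_nhds (Filter.Tendsto.congr' hevc hlim)
    rw [hP0] at hceq
    linarith
  have hmemIco : Set.Ico t₀ (τ (K + 1)) ∈ nhdsWithin t₀ (Set.Ici t₀) :=
    Ico_mem_nhdsGE_of_mem ⟨le_rfl, hK1⟩
  have heq : (fun u => x u i) =ᶠ[nhdsWithin t₀ (Set.Ici t₀)] fun u => x t₀ i + P u := by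
    filter_upwards [hmemIco] with u hu
    rcases eq_or_lt_of_le hu.1 with hequ | hlt
    · rw [← hequ, hP0, add_zero]
    · rw [key u ⟨hlt, hu.2⟩]
  have hfin : HasDerivWithinAt (fun u => x t₀ i + P u) (G t₀) (Set.Ici t₀) t₀ :=
    ((hPd t₀).const_add _).hasDerivWithinAt
  have hres := hfin.congr_of_eventuallyEq heq (by rw [hP0, add_zero])
  rwa [hGeq t₀ ht₀] at hres

set_option maxHeartbeats 2000000 in
/-- Corollary 3: for a switched **positive** linear system with discrete delays
`h^l_k ∈ (0, h]` and distributed delay kernel `B_k` (each `A⁰_k` Metzler, `A^l_k ≥ 0`,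
`B_k(θ) ≥ 0`), if there is `ξ ≫ 0` with
`(A⁰_k + Σ_l A^l_k + ∫_{-h}^0 B_k(s) ds) ξ ≪ 0` for every `k`, then the system is
exponentially stable under arbitrary switching. -/
theorem expStableSwD_of_common_LCLF_positive {N n m : ℕ} (h : ℝ) (hh : 0 < h)
    (A0 : Fin N → Matrix (Fin n) (Fin n) ℝ)
    (hMetzler : ∀ k, ∀ i j, i ≠ j → 0 ≤ A0 k i j)
    (A : Fin N → Fin m → Matrix (Fin n) (Fin n) ℝ)
    (hApos : ∀ k l i j, 0 ≤ A k l i j)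
    (hd : Fin N → Fin m → ℝ)
    (hdpos : ∀ k l, 0 < hd k l) (hdle : ∀ k l, hd k l ≤ h)
    (hdmono : ∀ k, Monotone (hd k))
    (B : Fin N → ℝ → Matrix (Fin n) (Fin n) ℝ)
    (hBcont : ∀ k i j, ContinuousOn (fun θ => B k θ i j) (Set.Icc (-h) 0))
    (hBpos : ∀ k, ∀ θ ∈ Set.Icc (-h) (0:ℝ), ∀ i j, 0 ≤ B k θ i j)
    (ξ : Fin n → ℝ) (hξ : ∀ i, 0 < ξ i)
    (hLCLF : ∀ k, ∀ i,
      ((A0 k + (∑ l, A k l) +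
          Matrix.of fun a b => ∫ s in (-h)..(0:ℝ), B k s a b).mulVec ξ) i < 0) :
    ExpStableSwD h A0 A hd B := by
  rcases isEmpty_or_nonempty (Fin n) with hemp | hne
  · refine ⟨1, one_pos, 1, one_pos, ?_⟩
    intro σ hσ φ x hsol t ht
    have hx0 : x t = 0 := funext fun i => isEmptyElim i
    rw [hx0, norm_zero]
    positivity
  obtain ⟨i₀, -, hi₀⟩ := Finset.exists_min_image Finset.univ ξ Finset.univ_nonempty
  obtain ⟨i₁, -, hi₁⟩ := Finset.exists_max_image Finset.univ ξ Finset.univ_nonempty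
  have hξ₀ : 0 < ξ i₀ := hξ i₀
  set a0 : Fin N → Fin n → ℝ := fun k i => ∑ j, A0 k i j * ξ j with ha0
  set r : Fin N → Fin n → ℝ := fun k i =>
    (∑ j, (∑ l, A k l i j) * ξ j) + ∑ j, (∫ s in (-h)..(0:ℝ), B k s i j) * ξ j with hr
  have hP : ∀ k i, a0 k i + r k i < 0 := by
    intro k i
    have hl := hLCLF k i
    have hexp : ((A0 k + (∑ l, A k l) +
        Matrix.of fun a b => ∫ s in (-h)..(0:ℝ), B k s a b).mulVec ξ) i
        = a0 k i + r k i := by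
      simp only [Matrix.mulVec, dotProduct, Matrix.add_apply, Matrix.sum_apply,
        Matrix.of_apply, add_mul, Finset.sum_add_distrib, ha0, hr]
      ring
    rwa [hexp] at hl
  have hαex : ∃ α : ℝ, 0 < α ∧ ∀ k i, a0 k i + Real.exp (α * h) * r k i + α * ξ i < 0 := by
    have hev : ∀ᶠ α in nhdsWithin (0:ℝ) (Set.Ioi 0),
        ∀ k : Fin N, ∀ i : Fin n, a0 k i + Real.exp (α * h) * r k i + α * ξ i < 0 := by
      rw [Filter.eventually_all]
      intro k
      rw [Filter.eventually_all]
      intro i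
      have hcont : Filter.Tendsto (fun α : ℝ => a0 k i + Real.exp (α * h) * r k i + α * ξ i)
          (nhds 0) (nhds (a0 k i + Real.exp ((0:ℝ) * h) * r k i + (0:ℝ) * ξ i)) := by
        apply Continuous.tendsto
        fun_prop
      have hval : a0 k i + Real.exp ((0:ℝ) * h) * r k i + (0:ℝ) * ξ i < 0 := by
        simpa using hP k i
      exact (hcont.mono_left nhdsWithin_le_nhds).eventually_lt_const hval
    obtain ⟨α, hα1, hα2⟩ := (hev.and self_mem_nhdsWithin).exists
    exact ⟨α, hα2, hα1⟩
  obtain ⟨α, hα0, hα⟩ := hαex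
  refine ⟨ξ i₁ / ξ i₀, div_pos (hξ i₁) hξ₀, α, hα0, ?_⟩
  intro σ hσ φ x hsol t ht
  have hx := hsol.1
  have hxφ := hsol.2.1
  have hxj : ∀ j, ContinuousOn (fun u => x u j) (Set.Ici (-h)) :=
    fun j => (continuous_apply j).comp_continuousOn hx
  have hxjat : ∀ j, ∀ u : ℝ, 0 ≤ u → ContinuousAt (fun v => x v j) u := by
    intro j u hu
    have : Set.Ici (-h) ∈ nhds u := Ici_mem_nhds (by linarith)
    exact (hxj j).continuousAt this
  have hKEY : ∀ ε > (0:ℝ), ∀ u ≥ (0:ℝ), ∀ j,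
      |x u j| ≤ ((‖φ‖ + ε) / ξ i₀) * ξ j * Real.exp (-α * u) := by
    intro ε hε
    set c := (‖φ‖ + ε) / ξ i₀ with hc
    have hφ0 : (0:ℝ) ≤ ‖φ‖ := norm_nonneg _
    have hc0 : 0 < c := div_pos (by linarith) hξ₀
    have hcξ : ∀ j, ‖φ‖ < c * ξ j := by
      intro j
      have h1 : (1:ℝ) ≤ ξ j / ξ i₀ := (one_le_div hξ₀).2 (hi₀ j (Finset.mem_univ j))
      have h2 : c * ξ j = (‖φ‖ + ε) * (ξ j / ξ i₀) := by rw [hc]; ring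
      nlinarith
    have hinit : ∀ τ' ∈ Set.Icc (-h) (0:ℝ), ∀ j,
        |x τ' j| ≤ c * ξ j * Real.exp (-α * τ') := by
      intro τ' hτ' j
      have h1 : x τ' = φ ⟨τ', hτ'⟩ := hxφ ⟨τ', hτ'⟩
      have h2 : |x τ' j| ≤ ‖φ‖ := by
        rw [h1]
        calc |φ ⟨τ', hτ'⟩ j| = ‖φ ⟨τ', hτ'⟩ j‖ := (Real.norm_eq_abs _).symm
        _ ≤ ‖φ ⟨τ', hτ'⟩‖ := norm_le_pi_norm _ j
        _ ≤ ‖φ‖ := ContinuousMap.norm_coe_le_norm φ _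
      have h3 : (1:ℝ) ≤ Real.exp (-α * τ') := by
        rw [Real.one_le_exp_iff]
        nlinarith [hτ'.2, hα0]
      have h4 : 0 < ξ j := hξ j
      nlinarith [hcξ j]
    by_contra hcon
    push_neg at hcon
    obtain ⟨s₀, hs₀0, j₀, hj₀⟩ := hcon
    set U : Set ℝ := {u : ℝ | 0 ≤ u ∧ ∃ j, c * ξ j * Real.exp (-α * u) < |x u j|} with hU
    have hUne : U.Nonempty := ⟨s₀, hs₀0, j₀, hj₀⟩
    have hUbdd : BddBelow U := ⟨0, fun u hu => hu.1⟩
    set t₁ := sInf U with ht₁def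
    have ht₁0 : 0 ≤ t₁ := le_csInf hUne fun u hu => hu.1
    have ht₁le : ∀ u ∈ U, t₁ ≤ u := fun u hu => csInf_le hUbdd hu
    have hbefore : ∀ u, 0 ≤ u → u < t₁ → ∀ j, |x u j| ≤ c * ξ j * Real.exp (-α * u) := by
      intro u hu hut j
      by_contra hcon2
      push_neg at hcon2
      exact absurd (ht₁le u ⟨hu, j, hcon2⟩) (not_le.2 hut)
    have hAt : ∀ j, |x t₁ j| ≤ c * ξ j * Real.exp (-α * t₁) := by
      intro j
      by_contra hcon2
      push_neg at hcon2
      rcases eq_or_lt_of_le ht₁0 with h0 | h0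
      · have hini := hinit 0 ⟨by linarith, le_rfl⟩ j
        rw [← h0] at hcon2
        linarith
      · have hcont : ContinuousAt (fun u => c * ξ j * Real.exp (-α * u) - |x u j|) t₁ := by
          have h1 : ContinuousAt (fun u => |x u j|) t₁ := (hxjat j t₁ ht₁0).abs
          have h2 : ContinuousAt (fun u : ℝ => c * ξ j * Real.exp (-α * u)) t₁ := by fun_prop
          exact h2.sub h1
        have hval : c * ξ j * Real.exp (-α * t₁) - |x t₁ j| < 0 := by linarith
        have hev : ∀ᶠ u in nhds t₁, c * ξ j * Real.exp (-α * u) - |x u j| < 0 :=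
          hcont.tendsto.eventually_lt_const hval
        have hIoo : Set.Ioo 0 t₁ ∈ nhdsWithin t₁ (Set.Iio t₁) :=
          Ioo_mem_nhdsLT_of_mem ⟨h0, le_rfl⟩
        obtain ⟨u, hu1, hu2⟩ := ((hev.filter_mono nhdsWithin_le_nhds).and hIoo).exists
        have huU : u ∈ U := ⟨hu2.1.le, j, by linarith⟩
        exact absurd (ht₁le u huU) (not_le.2 hu2.2)
    have hball : ∀ u, -h ≤ u → u ≤ t₁ → ∀ j, |x u j| ≤ c * ξ j * Real.exp (-α * u) := by
      intro u hu1 hu2 j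
      rcases lt_or_ge u 0 with hu0 | hu0
      · exact hinit u ⟨hu1, hu0.le⟩ j
      · rcases eq_or_lt_of_le hu2 with he | hlt
        · rw [he]; exact hAt j
        · exact hbefore u hu0 hlt j
    have ht₁notU : t₁ ∉ U := by
      rintro ⟨-, j, hj⟩
      exact absurd (hAt j) (not_le.2 hj)
    have hstep : ∀ j, ∀ᶠ u in nhdsWithin t₁ (Set.Ioi t₁),
        |x u j| < c * ξ j * Real.exp (-α * u) := by
      intro j
      rcases eq_or_lt_of_le (hAt j) with heq | hlt
      swap
      · -- strict inequality at t₁ : use continuity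
        have hcont : ContinuousAt (fun u => |x u j| - c * ξ j * Real.exp (-α * u)) t₁ := by
          have h1 : ContinuousAt (fun u => |x u j|) t₁ := (hxjat j t₁ ht₁0).abs
          have h2 : ContinuousAt (fun u : ℝ => c * ξ j * Real.exp (-α * u)) t₁ := by fun_prop
          exact h1.sub h2
        have hval : |x t₁ j| - c * ξ j * Real.exp (-α * t₁) < 0 := by linarith
        have hev := hcont.tendsto.eventually_lt_const hval
        filter_upwards [hev.filter_mono nhdsWithin_le_nhds] with u hu
        linarith
      -- the equality case : derivative estimate
      set E := Real.exp (-α * t₁) with hE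
      have hEpos : 0 < E := Real.exp_pos _
      have hbpos : 0 < c * ξ j * E := mul_pos (mul_pos hc0 (hξ j)) hEpos
      obtain ⟨s, hs1, hsx⟩ : ∃ s : ℝ, (s = 1 ∨ s = -1) ∧ s * x t₁ j = |x t₁ j| := by
        rcases abs_cases (x t₁ j) with ⟨h1, -⟩ | ⟨h1, -⟩
        · exact ⟨1, Or.inl rfl, by rw [one_mul, h1]⟩
        · exact ⟨-1, Or.inr rfl, by rw [h1]; ring⟩
      have hsabs : ∀ y : ℝ, s * y ≤ |y| := by
        intro y
        rcases hs1 with rfl | rfl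
        · rw [one_mul]; exact le_abs_self y
        · rw [neg_one_mul]; exact neg_le_abs y
      have hEeq : s * x t₁ j = c * ξ j * E := by rw [hsx, heq]
      set k := σ t₁ with hk
      have hder := keyRightDeriv hh hσ hdle hBcont hsol ht₁0 j
      have hbd : HasDerivAt (fun u : ℝ => c * ξ j * Real.exp (-α * u))
          (c * ξ j * (Real.exp (-α * t₁) * (-α))) t₁ := by
        have h1 : HasDerivAt (fun u : ℝ => -α * u) (-α) t₁ := by
          simpa using (hasDerivAt_id t₁).const_mul (-α)
        exact h1.exp.const_mul (c * ξ j)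
      have hcE : 0 < c * E := mul_pos hc0 hEpos
      -- term-by-term estimates
      have hT0 : s * (∑ j', A0 k j j' * x t₁ j') ≤ (∑ j', A0 k j j' * ξ j') * (c * E) := by
        rw [Finset.mul_sum, Finset.sum_mul]
        refine Finset.sum_le_sum fun j' _ => ?_
        rcases eq_or_ne j' j with heqj | hne
        · rw [heqj]
          have he2 : s * (A0 k j j * x t₁ j) = A0 k j j * ξ j * (c * E) := by
            rw [show s * (A0 k j j * x t₁ j) = A0 k j j * (s * x t₁ j) from by ring, hEeq]
            ring
          exact le_of_eq he2
        · have h1 : 0 ≤ A0 k j j' := hMetzler k j j' (Ne.symm hne)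
          have h2 : s * x t₁ j' ≤ |x t₁ j'| := hsabs _
          have h3 : |x t₁ j'| ≤ c * ξ j' * E := hball t₁ (by linarith) le_rfl j'
          calc s * (A0 k j j' * x t₁ j') = A0 k j j' * (s * x t₁ j') := by ring
          _ ≤ A0 k j j' * (c * ξ j' * E) := mul_le_mul_of_nonneg_left (h2.trans h3) h1
          _ = A0 k j j' * ξ j' * (c * E) := by ring
      have hT1 : s * (∑ l, ∑ j', A k l j j' * x (t₁ - hd k l) j')
          ≤ (∑ l, ∑ j', A k l j j' * ξ j') * (c * E * Real.exp (α * h)) := by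
        rw [Finset.mul_sum, Finset.sum_mul]
        refine Finset.sum_le_sum fun l _ => ?_
        rw [Finset.mul_sum, Finset.sum_mul]
        refine Finset.sum_le_sum fun j' _ => ?_
        have h1 : 0 ≤ A k l j j' := hApos k l j j'
        have h2 : s * x (t₁ - hd k l) j' ≤ |x (t₁ - hd k l) j'| := hsabs _
        have h3 : |x (t₁ - hd k l) j'| ≤ c * ξ j' * Real.exp (-α * (t₁ - hd k l)) :=
          hball _ (by have := hdle k l; linarith) (by have := hdpos k l; linarith) j'
        have h4 : Real.exp (-α * (t₁ - hd k l)) ≤ E * Real.exp (α * h) := by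
          rw [hE, ← Real.exp_add]
          apply Real.exp_le_exp.2
          have h5 := hdle k l
          nlinarith [hα0.le]
        have h6 : 0 ≤ c * ξ j' := le_of_lt (mul_pos hc0 (hξ j'))
        have h5 : c * ξ j' * Real.exp (-α * (t₁ - hd k l)) ≤ c * ξ j' * (E * Real.exp (α * h)) :=
          mul_le_mul_of_nonneg_left h4 h6
        calc s * (A k l j j' * x (t₁ - hd k l) j')
            = A k l j j' * (s * x (t₁ - hd k l) j') := by ring
        _ ≤ A k l j j' * (c * ξ j' * (E * Real.exp (α * h))) :=
            mul_le_mul_of_nonneg_left (h2.trans (h3.trans h5)) h1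
        _ = A k l j j' * ξ j' * (c * E * Real.exp (α * h)) := by ring
      have hT2 : s * (∑ j', ∫ θ in (-h)..(0:ℝ), B k θ j j' * x (t₁ + θ) j')
          ≤ (∑ j', (∫ θ in (-h)..(0:ℝ), B k θ j j') * ξ j') * (c * E * Real.exp (α * h)) := by
        rw [Finset.mul_sum, Finset.sum_mul]
        refine Finset.sum_le_sum fun j' _ => ?_
        rw [← intervalIntegral.integral_const_mul]
        have hcx : ContinuousOn (fun θ : ℝ => x (t₁ + θ) j') (Set.Icc (-h) 0) := by
          have hmap : ∀ θ ∈ Set.Icc (-h) (0:ℝ), t₁ + θ ∈ Set.Ici (-h) := by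
            intro θ hθ
            have := hθ.1
            exact Set.mem_Ici.mpr (by linarith)
          exact (hxj j').comp (by fun_prop) hmap
        have hint1 : IntervalIntegrable (fun θ => s * (B k θ j j' * x (t₁ + θ) j'))
            volume (-h) 0 :=
          (continuousOn_const.mul ((hBcont k j j').mul hcx)).intervalIntegrable_of_Icc
            (by linarith)
        have hint2 : IntervalIntegrable
            (fun θ => B k θ j j' * (c * ξ j' * (E * Real.exp (α * h)))) volume (-h) 0 :=
          ((hBcont k j j').mul continuousOn_const).intervalIntegrable_of_Icc (by linarith)
        have hle : ∀ θ ∈ Set.Icc (-h) (0:ℝ), s * (B k θ j j' * x (t₁ + θ) j')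
            ≤ B k θ j j' * (c * ξ j' * (E * Real.exp (α * h))) := by
          intro θ hθ
          have h1 : 0 ≤ B k θ j j' := hBpos k θ hθ j j'
          have h2 : s * x (t₁ + θ) j' ≤ |x (t₁ + θ) j'| := hsabs _
          have h3 : |x (t₁ + θ) j'| ≤ c * ξ j' * Real.exp (-α * (t₁ + θ)) :=
            hball _ (by have := hθ.1; linarith) (by have := hθ.2; linarith) j'
          have h4 : Real.exp (-α * (t₁ + θ)) ≤ E * Real.exp (α * h) := by
            rw [hE, ← Real.exp_add]
            apply Real.exp_le_exp.2
            have h5 := hθ.1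
            nlinarith [hα0.le]
          have h6 : 0 ≤ c * ξ j' := le_of_lt (mul_pos hc0 (hξ j'))
          have h5 : c * ξ j' * Real.exp (-α * (t₁ + θ)) ≤ c * ξ j' * (E * Real.exp (α * h)) :=
            mul_le_mul_of_nonneg_left h4 h6
          calc s * (B k θ j j' * x (t₁ + θ) j') = B k θ j j' * (s * x (t₁ + θ) j') := by ring
          _ ≤ B k θ j j' * (c * ξ j' * (E * Real.exp (α * h))) :=
              mul_le_mul_of_nonneg_left (h2.trans (h3.trans h5)) h1
        calc ∫ θ in (-h)..(0:ℝ), s * (B k θ j j' * x (t₁ + θ) j')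
            ≤ ∫ θ in (-h)..(0:ℝ), B k θ j j' * (c * ξ j' * (E * Real.exp (α * h))) :=
              intervalIntegral.integral_mono_on (by linarith) hint1 hint2 hle
        _ = (∫ θ in (-h)..(0:ℝ), B k θ j j') * (c * ξ j' * (E * Real.exp (α * h))) :=
              intervalIntegral.integral_mul_const _ _
        _ = (∫ θ in (-h)..(0:ℝ), B k θ j j') * ξ j' * (c * E * Real.exp (α * h)) := by ring
      have hrsum : (∑ l, ∑ j', A k l j j' * ξ j') = ∑ j', (∑ l, A k l j j') * ξ j' := by
        rw [Finset.sum_comm]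
        exact Finset.sum_congr rfl fun j' _ => (Finset.sum_mul _ _ _).symm
      have hαkj := hα k j
      have hsD : s * ((∑ j', A0 k j j' * x t₁ j') +
          (∑ l, ∑ j', A k l j j' * x (t₁ - hd k l) j') +
          ∑ j', ∫ θ in (-h)..(0:ℝ), B k θ j j' * x (t₁ + θ) j')
          < c * ξ j * (Real.exp (-α * t₁) * (-α)) := by
        have hcomb : s * ((∑ j', A0 k j j' * x t₁ j') +
            (∑ l, ∑ j', A k l j j' * x (t₁ - hd k l) j') +
            ∑ j', ∫ θ in (-h)..(0:ℝ), B k θ j j' * x (t₁ + θ) j')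
            ≤ a0 k j * (c * E) + r k j * (c * E * Real.exp (α * h)) := by
          have h7 := add_le_add (add_le_add hT0 hT1) hT2
          calc s * ((∑ j', A0 k j j' * x t₁ j') +
              (∑ l, ∑ j', A k l j j' * x (t₁ - hd k l) j') +
              ∑ j', ∫ θ in (-h)..(0:ℝ), B k θ j j' * x (t₁ + θ) j')
              = s * (∑ j', A0 k j j' * x t₁ j') +
                s * (∑ l, ∑ j', A k l j j' * x (t₁ - hd k l) j') +
                s * (∑ j', ∫ θ in (-h)..(0:ℝ), B k θ j j' * x (t₁ + θ) j') := by ring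
          _ ≤ (∑ j', A0 k j j' * ξ j') * (c * E) +
                (∑ l, ∑ j', A k l j j' * ξ j') * (c * E * Real.exp (α * h)) +
                (∑ j', (∫ θ in (-h)..(0:ℝ), B k θ j j') * ξ j') *
                  (c * E * Real.exp (α * h)) := h7
          _ = a0 k j * (c * E) + r k j * (c * E * Real.exp (α * h)) := by
              rw [hrsum, ha0, hr]; ring
        have h8 : a0 k j + Real.exp (α * h) * r k j < -α * ξ j := by
          linarith [hαkj]
        have h9 : a0 k j * (c * E) + r k j * (c * E * Real.exp (α * h))
            < (-α * ξ j) * (c * E) := by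
          have h9a : a0 k j * (c * E) + r k j * (c * E * Real.exp (α * h))
              = (a0 k j + Real.exp (α * h) * r k j) * (c * E) := by ring
          rw [h9a]
          exact mul_lt_mul_of_pos_right h8 hcE
        have h10 : (-α * ξ j) * (c * E) = c * ξ j * (Real.exp (-α * t₁) * (-α)) := by
          rw [hE]; ring
        linarith
      have hψ : HasDerivWithinAt (fun u => s * x u j - c * ξ j * Real.exp (-α * u))
          (s * ((∑ j', A0 k j j' * x t₁ j') +
            (∑ l, ∑ j', A k l j j' * x (t₁ - hd k l) j') +
            ∑ j', ∫ θ in (-h)..(0:ℝ), B k θ j j' * x (t₁ + θ) j') -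
            c * ξ j * (Real.exp (-α * t₁) * (-α))) (Set.Ici t₁) t₁ :=
        (hder.const_mul s).sub hbd.hasDerivWithinAt
      have hψ0 : s * x t₁ j - c * ξ j * Real.exp (-α * t₁) = 0 := by
        rw [← hE, hEeq]; ring
      have hslope : ∀ᶠ u in nhdsWithin t₁ (Set.Ioi t₁),
          s * x u j - c * ξ j * Real.exp (-α * u) < 0 := by
        have h7 := hasDerivWithinAt_iff_tendsto_slope.1 hψ
        rw [Set.Ici_sdiff_left] at h7
        have h9 := h7.eventually_lt_const (by linarith : s * ((∑ j', A0 k j j' * x t₁ j') +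
            (∑ l, ∑ j', A k l j j' * x (t₁ - hd k l) j') +
            ∑ j', ∫ θ in (-h)..(0:ℝ), B k θ j j' * x (t₁ + θ) j') -
            c * ξ j * (Real.exp (-α * t₁) * (-α)) < 0)
        filter_upwards [h9, self_mem_nhdsWithin] with u hu hu'
        have hu2 : t₁ < u := hu'
        rw [slope_def_field, hψ0, sub_zero] at hu
        rcases div_neg_iff.1 hu with ⟨-, hlt2⟩ | ⟨hlt1, -⟩
        · linarith
        · linarith
      have hother : ∀ᶠ u in nhdsWithin t₁ (Set.Ioi t₁),
          -(s * x u j) - c * ξ j * Real.exp (-α * u) < 0 := by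
        have hval : -(s * x t₁ j) - c * ξ j * Real.exp (-α * t₁) < 0 := by
          rw [← hE, hEeq]
          nlinarith
        have hcont : ContinuousAt (fun u => -(s * x u j) - c * ξ j * Real.exp (-α * u)) t₁ := by
          have h1 : ContinuousAt (fun u => x u j) t₁ := hxjat j t₁ ht₁0
          have h2 : ContinuousAt (fun u : ℝ => c * ξ j * Real.exp (-α * u)) t₁ := by fun_prop
          exact ((h1.const_mul s).neg).sub h2
        exact (hcont.tendsto.eventually_lt_const hval).filter_mono nhdsWithin_le_nhds
      filter_upwards [hslope, hother] with u h1 h2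
      rcases hs1 with rfl | rfl
      · rw [one_mul] at h1 h2
        rw [abs_lt]
        constructor <;> linarith
      · rw [neg_one_mul] at h1 h2
        rw [abs_lt]
        constructor <;> linarith
    have hstep2 : ∀ᶠ u in nhdsWithin t₁ (Set.Ioi t₁),
        ∀ j, |x u j| < c * ξ j * Real.exp (-α * u) := Filter.eventually_all.2 hstep
    obtain ⟨u', hu', hsub⟩ := mem_nhdsGT_iff_exists_Ioo_subset.1 hstep2
    obtain ⟨w, hwU, hw2⟩ := exists_lt_of_csInf_lt hUne (show sInf U < u' from hu')
    have hw1 : t₁ ≤ w := ht₁le w hwU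
    have hwne : w ≠ t₁ := fun hcon3 => ht₁notU (hcon3 ▸ hwU)
    have hwIoo : w ∈ Set.Ioo t₁ u' := ⟨lt_of_le_of_ne hw1 (Ne.symm hwne), hw2⟩
    obtain ⟨-, j, hj⟩ := hwU
    exact absurd (hsub hwIoo j).le (not_le.2 hj)
  -- pass to the limit ε → 0 and conclude
  have hfin : ∀ j, |x t j| ≤ (‖φ‖ / ξ i₀) * ξ j * Real.exp (-α * t) := by
    intro j
    refine le_of_forall_pos_le_add fun ε' hε' => ?_
    have hKj : 0 < ξ j * Real.exp (-α * t) := mul_pos (hξ j) (Real.exp_pos _)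
    have hεp : 0 < ε' * ξ i₀ / (ξ j * Real.exp (-α * t)) := div_pos (mul_pos hε' hξ₀) hKj
    have hb := hKEY _ hεp t ht j
    calc |x t j| ≤ ((‖φ‖ + ε' * ξ i₀ / (ξ j * Real.exp (-α * t))) / ξ i₀) * ξ j *
        Real.exp (-α * t) := hb
    _ = (‖φ‖ / ξ i₀) * ξ j * Real.exp (-α * t) +
        (ε' * ξ i₀ / (ξ j * Real.exp (-α * t)) / ξ i₀) * (ξ j * Real.exp (-α * t)) := by
          ring
    _ = (‖φ‖ / ξ i₀) * ξ j * Real.exp (-α * t) + ε' := by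
        congr 1
        have hK0' : ξ j * Real.exp (-α * t) ≠ 0 := ne_of_gt hKj
        have hξ0' : ξ i₀ ≠ 0 := ne_of_gt hξ₀
        field_simp
        exact div_self (ne_of_gt (hξ j))
  have hnn : (0:ℝ) ≤ ξ i₁ / ξ i₀ * Real.exp (-α * t) * ‖φ‖ :=
    mul_nonneg (mul_nonneg (div_pos (hξ i₁) hξ₀).le (Real.exp_pos _).le) (norm_nonneg _)
  rw [pi_norm_le_iff_of_nonneg hnn]
  intro j
  rw [Real.norm_eq_abs]
  calc |x t j| ≤ (‖φ‖ / ξ i₀) * ξ j * Real.exp (-α * t) := hfin j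
  _ ≤ ξ i₁ / ξ i₀ * Real.exp (-α * t) * ‖φ‖ := by
      have h1 : ξ j ≤ ξ i₁ := hi₁ j (Finset.mem_univ j)
      have h2 : (0:ℝ) ≤ ‖φ‖ := norm_nonneg _
      have h3 : 0 < Real.exp (-α * t) := Real.exp_pos _
      have h4 : ‖φ‖ / ξ i₀ * ξ j * Real.exp (-α * t)
          = (‖φ‖ * ξ j * Real.exp (-α * t)) / ξ i₀ := by ring
      have h5 : ξ i₁ / ξ i₀ * Real.exp (-α * t) * ‖φ‖
          = (ξ i₁ * Real.exp (-α * t) * ‖φ‖) / ξ i₀ := by ring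
      rw [h4, h5]
      have h6 : ‖φ‖ * ξ j * Real.exp (-α * t) ≤ ξ i₁ * Real.exp (-α * t) * ‖φ‖ := by
        nlinarith [mul_nonneg h2 (mul_nonneg h3.le (sub_nonneg.2 h1))]
      exact (div_le_div_iff_of_pos_right hξ₀).2 h6

end
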